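/- arXiv:2305.01532 — 3 statements merged into one kernel-verified Lean document; each statement's English description precedes it below -/
import Mathlib

section
/- Let x₁,…,x_n ∈ [0,1) satisfy |∑_{j=1}^n e^{-2πik x_j}| ≤ ε for all integers k with 1 ≤ |k| ≤ n-1. Then for every pair of distinct indices i ≠ j, F_n(x_i - x_j) ≤ 2nε², where F_n is the Fejér kernel F_n(x) = ∑_{|k|≤n}(1-|k|/n)e^{2πikx}. -/
open Real Complex

/-- The Fejér kernel `F_n(x) = ∑_{|k| ≤ n} (1 - |k|/n) e^{2πikx}`,
written in its real form. -/
noncomputable def fejer (n : ℕ) (x : ℝ) : ℝ :=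
  ∑ k ∈ Finset.Icc (-(n : ℤ)) n, (1 - (|k| : ℝ) / n) * Real.cos (2 * π * (k : ℝ) * x)

open Finset

lemma range_shift_neg (n : ℕ) (g : ℤ → ℝ) :
    ∑ k ∈ range n, g ((k:ℤ) - n) = ∑ m ∈ Icc (-(n:ℤ)) (-1), g m := by
  rw [show (Icc (-(n:ℤ)) (-1)) = (range n).map ⟨fun k : ℕ => (k:ℤ) - n, show Function.Injective (fun k : ℕ => (k:ℤ) - n) from by intro a b (h : (a:ℤ) - n = (b:ℤ) - n); omega⟩ by
    ext m
    simp only [mem_Icc, mem_map, mem_range, Function.Embedding.coeFn_mk]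
    constructor
    · rintro ⟨h1, h2⟩; exact ⟨(m + n).toNat, by omega, by omega⟩
    · rintro ⟨k, hk, rfl⟩; omega]
  rw [Finset.sum_map]; simp

lemma range_shift_pos (n : ℕ) (g : ℤ → ℝ) :
    ∑ l ∈ range (n+1), g ((n:ℤ) - l) = ∑ m ∈ Icc (0:ℤ) n, g m := by
  rw [show (Icc (0:ℤ) (n:ℤ)) = (range (n+1)).map ⟨fun l : ℕ => (n:ℤ) - l, show Function.Injective (fun l : ℕ => (n:ℤ) - l) from by intro a b (h : (n:ℤ) - a = (n:ℤ) - b); omega⟩ by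
    ext m
    simp only [mem_Icc, mem_map, mem_range, Function.Embedding.coeFn_mk]
    constructor
    · rintro ⟨h1, h2⟩; exact ⟨((n:ℤ) - m).toNat, by omega, by omega⟩
    · rintro ⟨k, hk, rfl⟩; omega]
  rw [Finset.sum_map]; simp

lemma count_lemma (n : ℕ) (g : ℤ → ℝ) :
    ∑ k ∈ range n, ∑ l ∈ range n, g ((k:ℤ) - l)
      = ∑ m ∈ Icc (-(n:ℤ)) n, ((n:ℝ) - (|m| : ℤ)) * g m := by
  induction n with
  | zero => simp
  | succ n ih =>
    have L : ∑ k ∈ range (n+1), ∑ l ∈ range (n+1), g ((k:ℤ) - l)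
        = (∑ k ∈ range n, ∑ l ∈ range n, g ((k:ℤ)-l))
          + (∑ k ∈ range n, g ((k:ℤ) - n) + ∑ l ∈ range (n+1), g ((n:ℤ) - l)) := by
      rw [Finset.sum_range_succ]
      have : ∀ k ∈ range n, ∑ l ∈ range (n+1), g ((k:ℤ) - l)
          = (∑ l ∈ range n, g ((k:ℤ) - l)) + g ((k:ℤ) - n) := fun k _ => by
        rw [Finset.sum_range_succ]
      rw [Finset.sum_congr rfl this, Finset.sum_add_distrib]

      ring
    rw [L, ih, range_shift_neg, range_shift_pos]
    have hunion : Icc (-(n:ℤ)) (-1) ∪ Icc (0:ℤ) n = Icc (-(n:ℤ)) n := by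
      ext m; simp only [mem_Icc, mem_union]; omega
    have hdisj : Disjoint (Icc (-(n:ℤ)) (-1)) (Icc (0:ℤ) n) := by
      rw [Finset.disjoint_left]; intro m h1 h2; simp only [mem_Icc] at h1 h2; omega
    rw [← Finset.sum_union hdisj, hunion]
    have hsub : Icc (-(n:ℤ)) n ⊆ Icc (-((n+1:ℕ):ℤ)) ((n+1:ℕ):ℤ) := by
      intro m; simp only [mem_Icc]; push_cast; omega
    rw [← Finset.sum_subset hsub (fun m hm hm' => by
      simp only [mem_Icc] at hm hm'
      have h1 : |m| = (n:ℤ) + 1 := by rcases abs_cases m with ⟨e,_⟩|⟨e,_⟩ <;> omega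
      rw [h1]; push_cast; ring)]
    rw [← Finset.sum_add_distrib]
    apply Finset.sum_congr rfl
    intro m hm
    push_cast
    ring

lemma fejer_eq (n : ℕ) (hn : n ≠ 0) (y : ℝ) :
    (n:ℝ) * fejer n y
      = (∑ k ∈ range n, Real.cos (2*π*k*y))^2 + (∑ k ∈ range n, Real.sin (2*π*k*y))^2 := by
  have hn' : (n:ℝ) ≠ 0 := Nat.cast_ne_zero.mpr hn
  have h1 : (n:ℝ) * fejer n y
      = ∑ m ∈ Icc (-(n:ℤ)) n, ((n:ℝ) - (|m| : ℤ)) * Real.cos (2 * π * (m : ℝ) * y) := by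
    rw [fejer, Finset.mul_sum]
    apply Finset.sum_congr rfl
    intro m _
    field_simp
    push_cast; ring
  rw [h1, ← count_lemma n (fun m => Real.cos (2 * π * (m : ℝ) * y))]
  rw [sq, sq, Finset.sum_mul_sum, Finset.sum_mul_sum, ← Finset.sum_add_distrib]
  apply Finset.sum_congr rfl
  intro k _
  rw [← Finset.sum_add_distrib]
  apply Finset.sum_congr rfl
  intro l _
  rw [show 2 * π * (((k:ℤ) - (l:ℤ) : ℤ) : ℝ) * y = 2*π*k*y - 2*π*l*y by push_cast; ring,
    Real.cos_sub]

lemma fejer_nonneg (n : ℕ) (y : ℝ) : 0 ≤ fejer n y := by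
  rcases Nat.eq_zero_or_pos n with rfl | hn
  · simp [fejer]
  · have hn' : (0:ℝ) < n := by exact_mod_cast hn
    have := fejer_eq n hn.ne' y
    nlinarith [sq_nonneg (∑ k ∈ range n, Real.cos (2*π*k*y)), sq_nonneg (∑ k ∈ range n, Real.sin (2*π*k*y))]

lemma fejer_zero (n : ℕ) (hn : n ≠ 0) : fejer n 0 = n := by
  have hn' : (0:ℝ) < n := by exact_mod_cast Nat.pos_of_ne_zero hn
  have := fejer_eq n hn 0
  simp only [mul_zero, Real.cos_zero, Real.sin_zero, Finset.sum_const, card_range,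
    nsmul_eq_mul, mul_one] at this
  nlinarith

theorem fejer_pairwise_small (n : ℕ) (x : Fin n → ℝ) (hx : ∀ j, x j ∈ Set.Ico (0:ℝ) 1)
    (ε : ℝ)
    (hsmall : ∀ k : ℤ, 1 ≤ |k| → |k| ≤ (n : ℤ) - 1 →
      ‖∑ j, Complex.exp (-2 * π * I * (k : ℂ) * (x j : ℂ))‖ ≤ ε) :
    ∀ i j : Fin n, i ≠ j → fejer n (x i - x j) ≤ 2 * n * ε ^ 2 := by
  intro i j hij
  have hn : n ≠ 0 := fun h => by subst h; exact i.elim0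
  have hn' : (0:ℝ) < n := by exact_mod_cast Nat.pos_of_ne_zero hn
  set c : ℤ → ℝ := fun m => ∑ a : Fin n, Real.cos (2*π*m*(x a)) with hc
  set s : ℤ → ℝ := fun m => ∑ a : Fin n, Real.sin (2*π*m*(x a)) with hs
  -- step 1: Fourier bound
  have hCS : ∀ m : ℤ, 1 ≤ |m| → |m| ≤ (n:ℤ) - 1 → (c m)^2 + (s m)^2 ≤ ε^2 := by
    intro m h1 h2
    have hb := hsmall m h1 h2
    set z : ℂ := ∑ a : Fin n, Complex.exp (-2 * π * I * (m : ℂ) * (x a : ℂ)) with hz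
    have hre : z.re = c m := by
      rw [hz, Complex.re_sum]
      apply Finset.sum_congr rfl
      intro a _
      rw [show (-2 * (π:ℂ) * I * (m : ℂ) * (x a : ℂ)) = ((-(2*π*m*(x a)) : ℝ) : ℂ) * I by
        push_cast; ring]
      rw [Complex.exp_ofReal_mul_I_re, Real.cos_neg]
    have him : z.im = -(s m) := by
      rw [hz, Complex.im_sum]
      rw [hs]
      simp only [← Finset.sum_neg_distrib]
      apply Finset.sum_congr rfl
      intro a _
      rw [show (-2 * (π:ℂ) * I * (m : ℂ) * (x a : ℂ)) = ((-(2*π*m*(x a)) : ℝ) : ℂ) * I by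
        push_cast; ring]
      rw [Complex.exp_ofReal_mul_I_im, Real.sin_neg]
    have habs : (‖z‖)^2 = (c m)^2 + (s m)^2 := by
      rw [Complex.sq_norm, Complex.normSq_apply, hre, him]; ring
    have : (‖z‖)^2 ≤ ε^2 := by
      have h0 : (0:ℝ) ≤ ‖z‖ := norm_nonneg z
      nlinarith
    linarith [habs ▸ this]
  -- step 2: total sum identity
  have hT : ∑ a : Fin n, ∑ b : Fin n, fejer n (x a - x b)
      = ∑ m ∈ Icc (-(n:ℤ)) n, (1 - (|m| : ℤ) / n) * ((c m)^2 + (s m)^2) := by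
    simp only [fejer, ← Int.cast_abs]
    have e1 : ∀ a : Fin n, ∑ b : Fin n, ∑ k ∈ Icc (-(n:ℤ)) n,
        (1 - (|k| : ℤ) / n) * Real.cos (2 * π * (k:ℝ) * (x a - x b))
        = ∑ k ∈ Icc (-(n:ℤ)) n, ∑ b : Fin n,
        (1 - (|k| : ℤ) / n) * Real.cos (2 * π * (k:ℝ) * (x a - x b)) := fun a => Finset.sum_comm
    rw [Finset.sum_congr rfl (fun a _ => e1 a), Finset.sum_comm]
    apply Finset.sum_congr rfl
    intro m _
    simp only [← Finset.mul_sum]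
    congr 1
    have e2 : ∀ a b : Fin n, Real.cos (2 * π * (m:ℝ) * (x a - x b))
        = Real.cos (2*π*m*(x a)) * Real.cos (2*π*m*(x b))
          + Real.sin (2*π*m*(x a)) * Real.sin (2*π*m*(x b)) := by
      intro a b
      rw [show 2 * π * (m:ℝ) * (x a - x b) = 2*π*m*(x a) - 2*π*m*(x b) by ring, Real.cos_sub]
    simp only [e2, Finset.sum_add_distrib, ← Finset.sum_mul, ← Finset.mul_sum]
    rw [hc, hs]
    ring
  -- step 3: bound on total sum
  have hT2 : ∑ m ∈ Icc (-(n:ℤ)) n, (1 - (|m| : ℤ) / n) * ((c m)^2 + (s m)^2)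
      ≤ (n:ℝ)^2 + 2 * n * ε^2 := by
    have h0mem : (0:ℤ) ∈ Icc (-(n:ℤ)) n := by simp [mem_Icc]
    rw [← Finset.add_sum_erase _ _ h0mem]
    have hc0 : c 0 = n := by simp [hc]
    have hs0 : s 0 = 0 := by simp [hs]
    have hterm0 : (1 - ((|(0:ℤ)| : ℤ):ℝ) / n) * ((c 0)^2 + (s 0)^2) = (n:ℝ)^2 := by
      rw [hc0, hs0]; norm_num
    rw [hterm0]
    have hbound : ∀ m ∈ (Icc (-(n:ℤ)) n).erase 0,
        (1 - ((|m| : ℤ):ℝ) / n) * ((c m)^2 + (s m)^2) ≤ ε^2 := by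
      intro m hm
      simp only [mem_erase, mem_Icc] at hm
      obtain ⟨hm0, hm1, hm2⟩ := hm
      by_cases hcase : |m| ≤ (n:ℤ) - 1
      · have h1 : 1 ≤ |m| := by rcases abs_cases m with ⟨e,_⟩|⟨e,_⟩ <;> omega
        have hv := hCS m h1 hcase
        have hvnn : 0 ≤ (c m)^2 + (s m)^2 := by positivity
        have hco1 : (1 - ((|m| : ℤ):ℝ) / n) ≤ 1 := by
          have : (0:ℝ) ≤ ((|m| : ℤ):ℝ) / n := by positivity
          linarith
        have hco0 : (0:ℝ) ≤ 1 - ((|m| : ℤ):ℝ) / n := by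
          have : ((|m| : ℤ):ℝ) ≤ (n:ℝ) := by
            have : |m| ≤ (n:ℤ) := by rcases abs_cases m with ⟨e,_⟩|⟨e,_⟩ <;> omega
            exact_mod_cast this
          rw [sub_nonneg, div_le_one hn']
          exact this
        calc (1 - ((|m| : ℤ):ℝ) / n) * ((c m)^2 + (s m)^2)
            ≤ 1 * ((c m)^2 + (s m)^2) := by apply mul_le_mul_of_nonneg_right hco1 hvnn
          _ = (c m)^2 + (s m)^2 := by ring
          _ ≤ ε^2 := hv
      · have : |m| = (n:ℤ) := by rcases abs_cases m with ⟨e,_⟩|⟨e,_⟩ <;> omega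
        have : ((|m| : ℤ):ℝ) = (n:ℝ) := by exact_mod_cast this
        rw [this, div_self hn'.ne', sub_self, zero_mul]
        positivity
    have hcard : ((Icc (-(n:ℤ)) n).erase 0).card = 2 * n := by
      rw [Finset.card_erase_of_mem h0mem, Int.card_Icc]
      omega
    calc (n:ℝ)^2 + ∑ m ∈ (Icc (-(n:ℤ)) n).erase 0, (1 - ((|m| : ℤ):ℝ) / n) * ((c m)^2 + (s m)^2)
        ≤ (n:ℝ)^2 + ∑ m ∈ (Icc (-(n:ℤ)) n).erase 0, ε^2 := by
          gcongr with m hm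
          exact hbound m hm
      _ = (n:ℝ)^2 + 2 * n * ε^2 := by
          rw [Finset.sum_const, hcard]

          ring
  -- step 4: extract the single term
  have hkey : (n:ℝ)^2 + fejer n (x i - x j) ≤ ∑ a : Fin n, ∑ b : Fin n, fejer n (x a - x b) := by
    rw [← Finset.sum_product' (s := Finset.univ) (t := Finset.univ)
      (f := fun a b => fejer n (x a - x b))]
    set S : Finset (Fin n × Fin n) := insert (i, j) (Finset.univ.image fun a => (a, a)) with hS
    have hnotmem : (i, j) ∉ Finset.univ.image fun a : Fin n => (a, a) := by
      simp only [Finset.mem_image, Finset.mem_univ, true_and, Prod.mk.injEq, not_exists]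
      rintro a ⟨rfl, rfl⟩
      exact hij rfl
    have hsumS : ∑ p ∈ S, fejer n (x p.1 - x p.2) = fejer n (x i - x j) + (n:ℝ)^2 := by
      rw [hS, Finset.sum_insert hnotmem]
      congr 1
      rw [Finset.sum_image (fun a _ b _ h => (Prod.mk.injEq a a b b ▸ h).1)]
      have : ∀ a : Fin n, fejer n (x a - x a) = (n:ℝ) := by
        intro a; rw [sub_self, fejer_zero n hn]
      rw [Finset.sum_congr rfl (fun a _ => this a), Finset.sum_const, Finset.card_univ,
        Fintype.card_fin, nsmul_eq_mul]
      ring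
    have hsub : S ⊆ Finset.univ ×ˢ Finset.univ := fun p _ => by simp
    have := Finset.sum_le_sum_of_subset_of_nonneg hsub
      (fun p _ _ => fejer_nonneg n (x p.1 - x p.2))
    rw [hsumS] at this
    linarith
  linarith [hT ▸ (hT.symm ▸ hT2)]
end

section
/- Let n be odd and let f(x) = ∑_{1≤|j|≤(n-1)/2} a_j e^{2πijx} be a real-valued trigonometric polynomial with no constant term and frequencies at most (n-1)/2 in absolute value. Then min_{0≤k≤n-1} f((k+1/2)/n) ≤ -‖f‖_{L²([0,1])} / (3n²). -/
open Real Complex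

lemma int_exp (m : ℤ) : (∫ x in (0:ℝ)..1, Complex.exp (2*π*I*m*x)) = if m = 0 then 1 else 0 := by
  by_cases h : m = 0
  · simp [h]
  · have hc : (2*π*I*m : ℂ) ≠ 0 := by
      simp [Real.pi_ne_zero, Complex.I_ne_zero, h]
    rw [if_neg h]
    have := integral_exp_mul_complex (a := (0:ℝ)) (b := 1) hc
    simp only [Complex.ofReal_one, Complex.ofReal_zero, mul_one, mul_zero, Complex.exp_zero] at this
    rw [this]
    have h1 : Complex.exp (2*π*I*m) = 1 := by
      rw [Complex.exp_eq_one_iff]; exact ⟨m, by ring⟩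
    rw [h1]; simp

lemma disc_sum (n : ℕ) (hn : 1 ≤ n) (m : ℤ) (hm : ¬ (n:ℤ) ∣ m) :
    ∑ k ∈ Finset.range n, Complex.exp (2*π*I*m*((((k:ℕ):ℝ)+1/2)/n : ℝ)) = 0 := by
  have hn0 : (n:ℂ) ≠ 0 := Nat.cast_ne_zero.mpr (by omega)
  have hterm : ∀ k ∈ Finset.range n, Complex.exp (2*π*I*m*((((k:ℕ):ℝ)+1/2)/n : ℝ))
      = Complex.exp (π*I*m/n) * Complex.exp (2*π*I*m/n) ^ k := by
    intro k _
    rw [← Complex.exp_nat_mul, ← Complex.exp_add]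
    congr 1
    push_cast
    field_simp
    ring
  rw [Finset.sum_congr rfl hterm, ← Finset.mul_sum]
  have hr : Complex.exp (2*π*I*m/n) ≠ 1 := by
    intro hone
    rw [Complex.exp_eq_one_iff] at hone
    obtain ⟨t, h⟩ := hone
    apply hm
    refine ⟨t, ?_⟩
    have hI : (2*π*I : ℂ) ≠ 0 := by simp [Real.pi_ne_zero, Complex.I_ne_zero]
    have : (m : ℂ) = n * t := by
      field_simp at h
      have : (2*π*I) * (m:ℂ) = (2*π*I) * (n * t) := by rw [h]
      exact mul_left_cancel₀ hI this
    exact_mod_cast this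
  rw [geom_sum_eq hr]
  have : Complex.exp (2*π*I*m/n) ^ n = 1 := by
    rw [← Complex.exp_nat_mul]
    rw [Complex.exp_eq_one_iff]
    refine ⟨m, ?_⟩
    field_simp
  rw [this]
  simp

theorem trig_poly_negative_at_midpoint (n : ℕ) (hn : Odd n) (hn1 : 1 ≤ n)
    (a : ℤ → ℂ) (hconj : ∀ j : ℤ, a (-j) = starRingEnd ℂ (a j))
    (f : ℝ → ℝ)
    (hf : ∀ x : ℝ, (f x : ℂ) =
      ∑ j ∈ (Finset.Icc (-(((n - 1) / 2 : ℕ) : ℤ)) (((n - 1) / 2 : ℕ) : ℤ)).erase 0,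
        a j * Complex.exp (2 * π * I * (j : ℂ) * (x : ℂ))) :
    ∃ k : ℕ, k ≤ n - 1 ∧
      f (((k : ℝ) + 1/2) / n)
        ≤ -Real.sqrt (∫ x in (0:ℝ)..1, f x ^ 2) / (3 * (n : ℝ) ^ 2) := by
  set N : ℕ := (n - 1) / 2 with hNdef
  set S : Finset ℤ := (Finset.Icc (-(N : ℤ)) (N : ℤ)).erase 0 with hSdef
  -- n = 2N + 1
  have h2N : 2 * N + 1 = n := by
    obtain ⟨t, ht⟩ := hn; omega
  -- membership facts
  have hmemS : ∀ j ∈ S, j ≠ 0 ∧ -(N:ℤ) ≤ j ∧ j ≤ (N:ℤ) := by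
    intro j hj
    rw [hSdef, Finset.mem_erase, Finset.mem_Icc] at hj
    exact ⟨hj.1, hj.2.1, hj.2.2⟩
  have hnegS : ∀ j ∈ S, -j ∈ S := by
    intro j hj
    obtain ⟨h1, h2, h3⟩ := hmemS j hj
    rw [hSdef, Finset.mem_erase, Finset.mem_Icc]
    exact ⟨by omega, by omega, by omega⟩
  -- non-divisibility
  have hndvd : ∀ m : ℤ, m ≠ 0 → |m| ≤ 2 * (N:ℤ) → ¬ (n:ℤ) ∣ m := by
    intro m hm hbound hd
    have h1 : (n:ℤ) ≤ |m| := Int.le_of_dvd (abs_pos.mpr hm) ((dvd_abs _ _).mpr hd)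
    have : (n:ℤ) = 2 * N + 1 := by exact_mod_cast h2N.symm
    omega
  -- Step 1 : sum of sampled values is zero
  have hsum : ∑ k ∈ Finset.range n, f (((k:ℝ) + 1/2)/n) = 0 := by
    have hC : ((∑ k ∈ Finset.range n, f (((k:ℝ) + 1/2)/n) : ℝ) : ℂ) = 0 := by
      push_cast
      calc ∑ k ∈ Finset.range n, ((f (((k:ℝ) + 1/2)/n) : ℝ) : ℂ)
          = ∑ k ∈ Finset.range n, ∑ j ∈ S,
              a j * Complex.exp (2 * π * I * (j : ℂ) * ((((k:ℝ) + 1/2)/n : ℝ) : ℂ)) := by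
            refine Finset.sum_congr rfl fun k _ => ?_
            exact hf _
        _ = ∑ j ∈ S, ∑ k ∈ Finset.range n,
              a j * Complex.exp (2 * π * I * (j : ℂ) * ((((k:ℝ) + 1/2)/n : ℝ) : ℂ)) :=
            Finset.sum_comm
        _ = 0 := by
            refine Finset.sum_eq_zero fun j hj => ?_
            obtain ⟨h1, h2, h3⟩ := hmemS j hj
            rw [← Finset.mul_sum]
            have := disc_sum n hn1 j (hndvd j h1 (by rw [abs_le]; omega))
            rw [this, mul_zero]
    exact_mod_cast hC
  -- pointwise expansion of the square
  have heq : ∀ x : ℝ, ((f x : ℝ) : ℂ)^2 = ∑ j ∈ S, ∑ j' ∈ S,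
      a j * a j' * Complex.exp (2 * π * I * ((j + j' : ℤ) : ℂ) * (x : ℂ)) := by
    intro x
    rw [sq, hf x, Finset.sum_mul_sum]
    refine Finset.sum_congr rfl fun j _ => Finset.sum_congr rfl fun j' _ => ?_
    rw [show (2 * π * I * ((j + j' : ℤ) : ℂ) * (x : ℂ))
        = 2 * π * I * (j : ℂ) * (x:ℂ) + 2 * π * I * (j' : ℂ) * (x:ℂ) by push_cast; ring,
      Complex.exp_add]
    ring
  set T : ℂ := ∑ j ∈ S, a j * a (-j) with hT
  -- Step 2a : integral
  have hInt : ((∫ x in (0:ℝ)..1, f x ^ 2 : ℝ) : ℂ) = T := by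
    rw [← intervalIntegral.integral_ofReal]
    have : ∀ x : ℝ, ((f x ^ 2 : ℝ) : ℂ) = ∑ j ∈ S, ∑ j' ∈ S,
        a j * a j' * Complex.exp (2 * π * I * ((j + j' : ℤ) : ℂ) * (x : ℂ)) := by
      intro x; rw [Complex.ofReal_pow]; exact heq x
    rw [intervalIntegral.integral_congr (fun x _ => this x)]
    rw [intervalIntegral.integral_finset_sum]
    · refine Finset.sum_congr rfl fun j hj => ?_
      rw [intervalIntegral.integral_finset_sum]
      · refine (Finset.sum_eq_single_of_mem (-j) (hnegS j hj) ?_).trans ?_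
        · intro b _ hbne
          rw [intervalIntegral.integral_const_mul, int_exp, if_neg (by omega), mul_zero]
        · rw [intervalIntegral.integral_const_mul, int_exp,
            if_pos (by omega : j + -j = 0), mul_one]
      · intro j' _
        apply Continuous.intervalIntegrable
        fun_prop
    · intro j _
      apply Continuous.intervalIntegrable
      fun_prop
  -- Step 2b : discrete Parseval
  have hDisc : ((∑ k ∈ Finset.range n, f (((k:ℝ) + 1/2)/n) ^ 2 : ℝ) : ℂ) = n * T := by
    push_cast
    calc ∑ k ∈ Finset.range n, ((f (((k:ℝ) + 1/2)/n) : ℝ) : ℂ) ^ 2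
        = ∑ k ∈ Finset.range n, ∑ j ∈ S, ∑ j' ∈ S,
            a j * a j' * Complex.exp (2 * π * I * ((j + j' : ℤ) : ℂ) * ((((k:ℝ) + 1/2)/n : ℝ) : ℂ)) := by
          exact Finset.sum_congr rfl fun k _ => heq _
      _ = ∑ j ∈ S, ∑ j' ∈ S, a j * a j' * ∑ k ∈ Finset.range n,
            Complex.exp (2 * π * I * ((j + j' : ℤ) : ℂ) * ((((k:ℝ) + 1/2)/n : ℝ) : ℂ)) := by
          rw [Finset.sum_comm]
          refine Finset.sum_congr rfl fun j _ => ?_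
          rw [Finset.sum_comm]
          exact Finset.sum_congr rfl fun j' _ => (Finset.mul_sum _ _ _).symm
      _ = ∑ j ∈ S, a j * a (-j) * n := by
          refine Finset.sum_congr rfl fun j hj => ?_
          refine (Finset.sum_eq_single_of_mem (-j) (hnegS j hj) ?_).trans ?_
          · intro b hb hbne
            obtain ⟨hb1, hb2, hb3⟩ := hmemS b hb
            obtain ⟨hj1, hj2, hj3⟩ := hmemS j hj
            rw [disc_sum n hn1 (j + b) (hndvd _ (by omega) (by rw [abs_le]; omega)), mul_zero]
          · have h0 : j + -j = 0 := by omega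
            rw [h0]
            simp
      _ = (n : ℂ) * T := by
          rw [hT, Finset.mul_sum, Finset.sum_congr rfl fun j _ => mul_comm (a j * a (-j)) (n:ℂ)]
  have hpar : (∑ k ∈ Finset.range n, f (((k:ℝ) + 1/2)/n) ^ 2)
      = n * ∫ x in (0:ℝ)..1, f x ^ 2 := by
    have h : ((∑ k ∈ Finset.range n, f (((k:ℝ) + 1/2)/n) ^ 2 : ℝ) : ℂ)
        = (((n : ℝ) * ∫ x in (0:ℝ)..1, f x ^ 2 : ℝ) : ℂ) := by
      rw [hDisc]; push_cast; rw [hInt]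
    exact_mod_cast h
  -- Step 3 : the inequality
  set V : ℝ := ∫ x in (0:ℝ)..1, f x ^ 2 with hV
  have hnR : (1:ℝ) ≤ (n:ℝ) := by exact_mod_cast hn1
  have hsq_sum_nonneg : (0:ℝ) ≤ ∑ k ∈ Finset.range n, f (((k:ℝ) + 1/2)/n) ^ 2 :=
    Finset.sum_nonneg fun k _ => sq_nonneg _
  have hVnn : 0 ≤ V := by nlinarith [hpar]
  set v : ℝ := Real.sqrt V with hv
  have hvnn : 0 ≤ v := Real.sqrt_nonneg _
  have hexists : ∃ k ∈ Finset.range n, V ≤ f (((k:ℝ) + 1/2)/n) ^ 2 := by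
    by_contra hcon
    push_neg at hcon
    have hlt := Finset.sum_lt_sum_of_nonempty
      (Finset.nonempty_range_iff.mpr (by omega)) hcon
    rw [Finset.sum_const, Finset.card_range, nsmul_eq_mul] at hlt
    linarith [hpar]
  obtain ⟨k, hkmem, hkV⟩ := hexists
  have hkabs : v ≤ |f (((k:ℝ) + 1/2)/n)| := by
    rw [← Real.sqrt_sq_eq_abs]
    exact Real.sqrt_le_sqrt hkV
  have h3n : (0:ℝ) < 3 * (n:ℝ)^2 := by positivity
  rcases le_abs.mp hkabs with hpos | hneg
  · -- f(x_k) ≥ v ; use the minimizing point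
    obtain ⟨k₀, hk₀mem, hmin⟩ := Finset.exists_min_image (Finset.range n)
      (fun k : ℕ => f (((k:ℝ) + 1/2)/n)) ⟨0, Finset.mem_range.mpr (by omega)⟩
    refine ⟨k₀, by have := Finset.mem_range.mp hk₀mem; omega, ?_⟩
    set m : ℝ := f (((k₀:ℝ) + 1/2)/n) with hm
    -- m ≤ 0
    have hnm : (n:ℝ) * m ≤ 0 := by
      have := Finset.card_nsmul_le_sum (Finset.range n)
        (fun k : ℕ => f (((k:ℝ) + 1/2)/n)) m (fun i hi => hmin i hi)
      rw [Finset.card_range, nsmul_eq_mul] at this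
      linarith [hsum]
    have hm0 : m ≤ 0 := by nlinarith
    -- (n-1) * m ≤ -v
    have hsplit : ∑ k' ∈ Finset.range n, f (((k':ℝ) + 1/2)/n)
        = f (((k:ℝ) + 1/2)/n) + ∑ k' ∈ (Finset.range n).erase k, f (((k':ℝ) + 1/2)/n) :=
      (Finset.add_sum_erase _ _ hkmem).symm
    have hlow : ((n:ℝ) - 1) * m ≤ ∑ k' ∈ (Finset.range n).erase k, f (((k':ℝ) + 1/2)/n) := by
      have := Finset.card_nsmul_le_sum ((Finset.range n).erase k)
        (fun k' : ℕ => f (((k':ℝ) + 1/2)/n)) m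
        (fun i hi => hmin i (Finset.mem_of_mem_erase hi))
      rw [Finset.card_erase_of_mem hkmem, Finset.card_range, nsmul_eq_mul] at this
      have hcast : ((n - 1 : ℕ) : ℝ) = (n:ℝ) - 1 := by
        push_cast [Nat.cast_sub hn1]; ring
      rw [hcast] at this
      exact this
    have hkey : ((n:ℝ) - 1) * m ≤ -v := by
      have h0 : f (((k:ℝ) + 1/2)/n)
          + ∑ k' ∈ (Finset.range n).erase k, f (((k':ℝ) + 1/2)/n) = 0 := by
        rw [← hsplit]; exact hsum
      linarith
    rw [le_div_iff₀ h3n]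
    have hmul : m * (3 * (n:ℝ)^2) ≤ m * ((n:ℝ) - 1) :=
      mul_le_mul_of_nonpos_left (by nlinarith) hm0
    nlinarith
  · -- f(x_k) ≤ -v : use k itself
    refine ⟨k, by have := Finset.mem_range.mp hkmem; omega, ?_⟩
    have h1 : v / (3 * (n:ℝ)^2) ≤ v := div_le_self hvnn (by nlinarith)
    rw [neg_div]
    linarith
end

section
/- Let f(x) = ∑_{1≤|j|≤n-1} a_j e^{2πijx} be a real-valued trigonometric polynomial with zero mean. Then min_{0≤x≤1} f(x) ≤ -‖f‖_{L²([0,1])}/(3√n). -/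
open Real Complex

theorem trig_poly_min_negative (n : ℕ) (hn : 1 ≤ n)
    (a : ℤ → ℂ) (hconj : ∀ j : ℤ, a (-j) = starRingEnd ℂ (a j))
    (f : ℝ → ℝ)
    (hf : ∀ x : ℝ, (f x : ℂ) =
      ∑ j ∈ (Finset.Icc (-((n : ℤ) - 1)) ((n : ℤ) - 1)).erase 0,
        a j * Complex.exp (2 * π * I * (j : ℂ) * (x : ℂ))) :
    ∃ x ∈ Set.Icc (0:ℝ) 1,
      f x ≤ -Real.sqrt (∫ t in (0:ℝ)..1, f t ^ 2) / (3 * Real.sqrt n) := by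
  set s : Finset ℤ := (Finset.Icc (-((n : ℤ) - 1)) ((n : ℤ) - 1)).erase 0 with hs
  set E : ℤ → ℝ → ℂ := fun j x => Complex.exp (2 * π * I * (j : ℂ) * (x : ℂ)) with hE
  have hEcont : ∀ j : ℤ, Continuous (E j) := fun j =>
    Complex.continuous_exp.comp (continuous_const.mul Complex.continuous_ofReal)
  have hkey : ∀ j : ℤ, j ≠ 0 → (∫ x in (0:ℝ)..1, E j x) = 0 := by
    intro j hj
    have hc : (2 * (π:ℂ) * I * (j : ℂ)) ≠ 0 := by
      simp [Complex.ext_iff, Real.pi_ne_zero, hj]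
    show (∫ x in (0:ℝ)..1, Complex.exp (2 * π * I * (j : ℂ) * (x : ℂ))) = 0
    rw [integral_exp_mul_complex hc]
    norm_num
    rw [show (2 * (π:ℂ) * I * (j : ℂ)) = (j:ℂ) * (2 * π * I) by ring,
      Complex.exp_int_mul_two_pi_mul_I]
    simp
  have hkey0 : (∫ x in (0:ℝ)..1, E 0 x) = 1 := by
    show (∫ x in (0:ℝ)..1, Complex.exp (2 * π * I * ((0:ℤ) : ℂ) * (x : ℂ))) = 1
    simp
  have hEabs : ∀ (j : ℤ) (x : ℝ), ‖E j x‖ = 1 := by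
    intro j x
    show ‖Complex.exp (2 * π * I * (j : ℂ) * (x : ℂ))‖ = 1
    rw [show (2 * (π:ℂ) * I * (j : ℂ) * (x : ℂ)) = ((2 * π * j * x : ℝ) : ℂ) * I by
      push_cast; ring]
    exact Complex.norm_exp_ofReal_mul_I _
  have hEmul : ∀ (j k : ℤ) (t : ℝ), E j t * E k t = E (j + k) t := by
    intro j k t
    show Complex.exp _ * Complex.exp _ = Complex.exp _
    rw [← Complex.exp_add]
    congr 1
    push_cast; ring
  have hfE : ∀ x : ℝ, (f x : ℂ) = ∑ j ∈ s, a j * E j x := hf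
  clear_value E
  clear hf hE
  have hfc : Continuous f := by
    have h1 : Continuous fun x : ℝ => ((f x : ℂ)) := by
      rw [show (fun x : ℝ => ((f x : ℂ))) = fun x => ∑ j ∈ s, a j * E j x from funext hfE]
      exact continuous_finset_sum _ fun j _ => continuous_const.mul (hEcont j)
    have : Continuous fun x : ℝ => ((f x : ℂ)).re := Complex.continuous_re.comp h1
    simpa using this
  have hint : ∀ j : ℤ, IntervalIntegrable (fun x => a j * E j x) MeasureTheory.volume (0:ℝ) 1 :=
    fun j => (continuous_const.mul (hEcont j)).intervalIntegrable 0 1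
  -- zero mean
  have hmean : (∫ t in (0:ℝ)..1, f t) = 0 := by
    have h1 : ((∫ t in (0:ℝ)..1, f t : ℝ) : ℂ) = ∫ t in (0:ℝ)..1, ((f t : ℂ)) := by
      rw [← intervalIntegral.integral_ofReal]
    have h2 : (∫ t in (0:ℝ)..1, ((f t : ℂ))) = ∑ j ∈ s, a j * ∫ t in (0:ℝ)..1, E j t := by
      rw [show (fun t : ℝ => ((f t : ℂ))) = fun t => ∑ j ∈ s, a j * E j t from funext hfE]
      rw [intervalIntegral.integral_finset_sum (fun j _ => hint j)]
      exact Finset.sum_congr rfl fun j _ => intervalIntegral.integral_const_mul _ _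
    have h3 : ∑ j ∈ s, a j * ∫ t in (0:ℝ)..1, E j t = 0 := by
      refine Finset.sum_eq_zero fun j hj => ?_
      rw [hkey j (Finset.ne_of_mem_erase hj), mul_zero]
    have := h1.trans (h2.trans h3)
    exact_mod_cast this
  have hsym : ∀ j ∈ s, -j ∈ s := by
    intro j hj
    simp only [hs, Finset.mem_erase, Finset.mem_Icc] at hj ⊢
    omega
  -- Plancherel
  set S2 : ℝ := ∑ j ∈ s, Complex.normSq (a j) with hS2
  have hS2nn : 0 ≤ S2 := Finset.sum_nonneg fun j _ => Complex.normSq_nonneg _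
  have hplan : (∫ t in (0:ℝ)..1, f t ^ 2) = S2 := by
    have h1 : ((∫ t in (0:ℝ)..1, f t ^ 2 : ℝ) : ℂ) = ∫ t in (0:ℝ)..1, ((f t : ℂ)) ^ 2 := by
      rw [← intervalIntegral.integral_ofReal]
      congr 1; funext t; push_cast; ring
    have h2 : ∀ t : ℝ, ((f t : ℂ)) ^ 2 = ∑ p ∈ s ×ˢ s, (a p.1 * a p.2) * E (p.1 + p.2) t := by
      intro t
      rw [sq, hfE t, Finset.sum_mul_sum, Finset.sum_product]
      refine Finset.sum_congr rfl fun j _ => Finset.sum_congr rfl fun k _ => ?_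
      rw [← hEmul j k t]; ring
    have hi : ∀ p : ℤ × ℤ, IntervalIntegrable (fun t : ℝ => (a p.1 * a p.2) * E (p.1 + p.2) t)
        MeasureTheory.volume (0:ℝ) 1 :=
      fun p => (continuous_const.mul (hEcont (p.1 + p.2))).intervalIntegrable 0 1
    have h3 : (∫ t in (0:ℝ)..1, ((f t : ℂ)) ^ 2)
        = ∑ p ∈ s ×ˢ s, (a p.1 * a p.2) * ∫ t in (0:ℝ)..1, E (p.1 + p.2) t := by
      calc (∫ t in (0:ℝ)..1, ((f t : ℂ)) ^ 2)
          = ∫ t in (0:ℝ)..1, ∑ p ∈ s ×ˢ s, (a p.1 * a p.2) * E (p.1 + p.2) t :=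
            intervalIntegral.integral_congr (fun t _ => h2 t)
        _ = _ := by
            rw [intervalIntegral.integral_finset_sum (fun p _ => hi p)]
            exact Finset.sum_congr rfl fun p _ => intervalIntegral.integral_const_mul _ _
    have h4 : ∑ p ∈ s ×ˢ s, (a p.1 * a p.2) * ∫ t in (0:ℝ)..1, E (p.1 + p.2) t
        = ∑ j ∈ s, ((Complex.normSq (a j) : ℝ) : ℂ) := by
      rw [Finset.sum_product]
      refine Finset.sum_congr rfl fun j hj => ?_
      rw [Finset.sum_eq_single (-j)]
      · rw [show j + -j = (0:ℤ) by ring, hkey0, mul_one, hconj j, Complex.mul_conj]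
      · intro k _ hk
        have hne : j + k ≠ 0 := by omega
        rw [hkey _ hne, mul_zero]
      · intro h; exact absurd (hsym j hj) h
    have h5 : ((∫ t in (0:ℝ)..1, f t ^ 2 : ℝ) : ℂ) = ((S2 : ℝ) : ℂ) := by
      rw [h1, h3, h4, hS2]
      push_cast; ring
    exact_mod_cast h5
  -- sup-norm bound
  set A : ℝ := ∑ j ∈ s, ‖a j‖ with hA
  have hAnn : 0 ≤ A := Finset.sum_nonneg fun j _ => norm_nonneg _
  have habs : ∀ x : ℝ, |f x| ≤ A := by
    intro x
    rw [show |f x| = ‖((f x : ℂ))‖ by simp, hfE x]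
    calc ‖(∑ j ∈ s, a j * E j x)‖ ≤ ∑ j ∈ s, ‖(a j * E j x)‖ :=
          norm_sum_le _ _
      _ = A := by
          rw [hA]
          exact Finset.sum_congr rfl fun j _ => by rw [norm_mul, hEabs, mul_one]
  -- Cauchy-Schwarz
  have hcard : (s.card : ℝ) ≤ 2 * n := by
    have h1 : s.card ≤ (Finset.Icc (-((n : ℤ) - 1)) ((n : ℤ) - 1)).card := Finset.card_erase_le
    have h2 : (Finset.Icc (-((n : ℤ) - 1)) ((n : ℤ) - 1)).card = (2 * n - 1 : ℤ).toNat := by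
      rw [Int.card_Icc]; congr 1; omega
    have h3 : s.card ≤ 2 * n := by rw [h2] at h1; omega
    exact_mod_cast h3
  have hCS : A ^ 2 ≤ 2 * n * S2 := by
    have h1 : A ^ 2 ≤ (s.card : ℝ) * ∑ j ∈ s, ‖a j‖ ^ 2 := by
      rw [hA]; exact sq_sum_le_card_mul_sum_sq
    have h2 : ∑ j ∈ s, ‖a j‖ ^ 2 = S2 := by
      rw [hS2]; exact Finset.sum_congr rfl fun j _ => Complex.sq_norm _
    rw [h2] at h1
    calc A ^ 2 ≤ (s.card : ℝ) * S2 := h1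
      _ ≤ 2 * n * S2 := mul_le_mul_of_nonneg_right hcard hS2nn
  -- the minimizer
  obtain ⟨x₀, hx₀, hminOn⟩ := isCompact_Icc.exists_isMinOn (Set.nonempty_Icc.2 zero_le_one)
    (hfc.continuousOn (s := Set.Icc (0:ℝ) 1))
  refine ⟨x₀, hx₀, ?_⟩
  set m : ℝ := f x₀ with hm
  have hmin : ∀ t ∈ Set.Icc (0:ℝ) 1, m ≤ f t := fun t ht => hminOn ht
  have hm0 : m ≤ 0 := by
    have h1 : (∫ t in (0:ℝ)..1, (m : ℝ)) ≤ ∫ t in (0:ℝ)..1, f t := by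
      apply intervalIntegral.integral_mono_on zero_le_one
        intervalIntegrable_const (hfc.intervalIntegrable 0 1)
      intro t ht
      exact hmin t (by simpa using ht)
    simpa [hmean] using h1
  -- L1 bound
  have hL1 : (∫ t in (0:ℝ)..1, |f t|) ≤ -2 * m := by
    have h1 : (∫ t in (0:ℝ)..1, |f t|) ≤ ∫ t in (0:ℝ)..1, (f t - 2 * m) := by
      apply intervalIntegral.integral_mono_on zero_le_one
        (hfc.abs.intervalIntegrable 0 1)
        ((hfc.sub continuous_const).intervalIntegrable 0 1)
      intro t ht
      show |f t| ≤ f t - 2 * m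
      have h2 := hmin t (by simpa using ht)
      rcases abs_cases (f t) with ⟨h3, _⟩ | ⟨h3, _⟩ <;> rw [h3] <;> linarith
    have h2 : (∫ t in (0:ℝ)..1, (f t - 2 * m)) = -2 * m := by
      rw [intervalIntegral.integral_sub (hfc.intervalIntegrable 0 1) intervalIntegrable_const,
        hmean]
      simp
    linarith
  -- L2 bound via L1 and Linfty
  have hS2A : S2 ≤ (-2 * m) * A := by
    have h1 : (∫ t in (0:ℝ)..1, f t ^ 2) ≤ ∫ t in (0:ℝ)..1, |f t| * A := by
      apply intervalIntegral.integral_mono_on zero_le_one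
        ((hfc.pow 2).intervalIntegrable 0 1)
        ((hfc.abs.mul continuous_const).intervalIntegrable 0 1)
      intro t _
      show f t ^ 2 ≤ |f t| * A
      nlinarith [_root_.sq_abs (f t), abs_nonneg (f t),
        mul_le_mul_of_nonneg_left (habs t) (abs_nonneg (f t))]
    have h3 : (∫ t in (0:ℝ)..1, |f t| * A) = (∫ t in (0:ℝ)..1, |f t|) * A :=
      intervalIntegral.integral_mul_const _ _
    rw [hplan, h3] at h1
    calc S2 ≤ (∫ t in (0:ℝ)..1, |f t|) * A := h1
      _ ≤ (-2 * m) * A := mul_le_mul_of_nonneg_right hL1 hAnn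
  -- final arithmetic
  rw [hplan]
  set r : ℝ := Real.sqrt S2 with hr
  set q : ℝ := Real.sqrt n with hq
  have hrnn : 0 ≤ r := Real.sqrt_nonneg _
  have hqnn : 0 ≤ q := Real.sqrt_nonneg _
  have hr2 : r ^ 2 = S2 := Real.sq_sqrt hS2nn
  have hq2 : q ^ 2 = n := Real.sq_sqrt (Nat.cast_nonneg n)
  have hq1 : 1 ≤ q := by
    have hn1 : (1 : ℝ) ≤ n := by exact_mod_cast hn
    nlinarith
  have e1 : r ^ 2 ≤ (-2 * m) * A := by rw [hr2]; exact hS2A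
  have e2 : A ^ 2 ≤ 2 * q ^ 2 * r ^ 2 := by rw [hq2, hr2]; exact hCS
  clear_value S2 A m r q
  clear hfE hEcont hEabs hEmul hkey hkey0 hfc hint hmean hsym hplan habs hcard hCS hL1
    hS2A hmin hminOn hS2 hA hm hr hq
  rcases eq_or_lt_of_le hrnn with hr0 | hr0
  · rw [← hr0]
    simp only [neg_div, zero_div, neg_zero]
    exact hm0
  · rw [neg_div, le_neg, div_le_iff₀ (by positivity)]
    have e3 : r ^ 2 * r ^ 2 ≤ ((-2 * m) * A) * ((-2 * m) * A) :=
      mul_le_mul e1 e1 (sq_nonneg r) (le_trans (sq_nonneg r) e1)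
    have e4 : r ^ 2 * r ^ 2 ≤ 4 * m ^ 2 * (2 * q ^ 2 * r ^ 2) := by
      nlinarith [sq_nonneg m, e3, e2]
    have e5 : r ^ 2 ≤ 8 * m ^ 2 * q ^ 2 := by nlinarith [e4, mul_pos hr0 hr0]
    have e6 : r ^ 2 ≤ (-m * (3 * q)) ^ 2 := by nlinarith [e5, sq_nonneg (m * q)]
    have hy : 0 ≤ -m * (3 * q) := by nlinarith
    nlinarith [e6, hy, hr0]
end
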